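/- Let B be an n×n real matrix that is stable (all eigenvalues have negative real part) and D-unstable, i.e., there exists a positive diagonal matrix D such that B·D has an eigenvalue with positive real part. Then there exists a positive diagonal matrix D* such that B·D* has a purely imaginary nonzero eigenvalue or a zero eigenvalue; moreover since det(B·D*) ≠ 0, B·D* has a nonzero purely imaginary eigenvalue. -/

import Mathlib

open Matrix Polynomial

lemma evalCharpoly {n : ℕ} (M : Matrix (Fin n) (Fin n) ℂ) (μ : ℂ) :
    (M.charpoly).eval μ = (μ • (1 : Matrix (Fin n) (Fin n) ℂ) - M).det := by
  rw [Matrix.charpoly, ← Polynomial.coe_evalRingHom, RingHom.map_det]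
  congr 1
  ext i j
  by_cases h : i = j <;>
    simp [charmatrix_apply, h, Matrix.one_apply, Matrix.diagonal_apply, Matrix.smul_apply]

lemma eigBound {n : ℕ} (M : Matrix (Fin n) (Fin n) ℂ) (μ : ℂ)
    (h : (μ • (1 : Matrix (Fin n) (Fin n) ℂ) - M).det = 0) :
    ‖μ‖ ≤ ∑ i, ∑ j, ‖M i j‖ := by
  obtain ⟨v, hv0, hv⟩ := Matrix.exists_mulVec_eq_zero_iff.2 h
  obtain ⟨j0, hj0⟩ := Function.ne_iff.1 hv0
  obtain ⟨i, -, hi⟩ := Finset.exists_max_image Finset.univ (fun j => ‖v j‖) ⟨j0, Finset.mem_univ j0⟩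
  have hvi : 0 < ‖v i‖ := lt_of_lt_of_le (norm_pos_iff.2 hj0) (hi j0 (Finset.mem_univ _))
  have hv' : μ • v - M.mulVec v = 0 := by
    rw [← hv, Matrix.sub_mulVec, Matrix.smul_mulVec, Matrix.one_mulVec]
  have hvi' : μ * v i = ∑ j, M i j * v j := by
    have := congrFun hv' i
    simp only [Pi.sub_apply, Pi.smul_apply, smul_eq_mul, Pi.zero_apply, sub_eq_zero] at this
    simpa [Matrix.mulVec, dotProduct] using this
  have h1 : ‖μ‖ * ‖v i‖ ≤ (∑ j, ‖M i j‖) * ‖v i‖ := by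
    calc ‖μ‖ * ‖v i‖ = ‖μ * v i‖ := (norm_mul _ _).symm
    _ = ‖∑ j, M i j * v j‖ := by rw [hvi']
    _ ≤ ∑ j, ‖M i j * v j‖ := norm_sum_le _ _
    _ ≤ ∑ j, ‖M i j‖ * ‖v i‖ := by
        refine Finset.sum_le_sum fun j _ => ?_
        rw [norm_mul]
        exact mul_le_mul_of_nonneg_left (hi j (Finset.mem_univ _)) (norm_nonneg _)
    _ = (∑ j, ‖M i j‖) * ‖v i‖ := (Finset.sum_mul _ _ _).symm
  have h2 : ‖μ‖ ≤ ∑ j, ‖M i j‖ := le_of_mul_le_mul_right h1 hvi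
  refine h2.trans ?_
  exact Finset.single_le_sum (f := fun i => ∑ j, ‖M i j‖)
    (fun k _ => Finset.sum_nonneg fun j _ => norm_nonneg _) (Finset.mem_univ i)

lemma multisetNormProdGe (c : ℝ) (hc : 0 ≤ c) (s : Multiset ℂ) (h : ∀ x ∈ s, c ≤ ‖x‖) :
    c ^ Multiset.card s ≤ ‖s.prod‖ := by
  induction s using Multiset.induction with
  | empty => simp
  | cons a s ih =>
    rw [Multiset.prod_cons, Multiset.card_cons, norm_mul, pow_succ']
    exact mul_le_mul (h a (Multiset.mem_cons_self a s))
      (ih fun x hx => h x (Multiset.mem_cons_of_mem hx)) (pow_nonneg hc _) (norm_nonneg _)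

lemma evalNormGe {n : ℕ} (p : ℂ[X]) (hm : p.Monic) (hdeg : p.natDegree = n)
    (hroots : ∀ r ∈ p.roots, r.re < 0) (μ : ℂ) (hμ : 0 ≤ μ.re) :
    μ.re ^ n ≤ ‖p.eval μ‖ := by
  have hsplit : Splits p := IsAlgClosed.splits p
  have hcard : Multiset.card p.roots = n := by
    rw [← hdeg, eq_comm]
    simpa using hsplit.natDegree_eq_card_roots
  rw [hsplit.eval_eq_prod_roots, hm.leadingCoeff, one_mul]
  have := multisetNormProdGe μ.re hμ (p.roots.map fun a => μ - a) ?_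
  · simpa [hcard] using this
  · intro x hx
    obtain ⟨r, hr, rfl⟩ := Multiset.mem_map.1 hx
    calc μ.re ≤ μ.re - r.re := by linarith [hroots r hr]
    _ ≤ |(μ - r).re| := by rw [Complex.sub_re]; exact le_abs_self _
    _ ≤ ‖μ - r‖ := Complex.abs_re_le_norm _

theorem stable_D_unstable_imaginary_eigenvalue (n : ℕ) (B : Matrix (Fin n) (Fin n) ℝ)
    (hstable : ∀ μ : ℂ, ((B.map (Complex.ofReal)).charpoly).IsRoot μ → μ.re < 0)
    (hDunstable : ∃ d : Fin n → ℝ, (∀ i, 0 < d i) ∧ ∃ μ : ℂ, 0 < μ.re ∧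
      (((B * Matrix.diagonal d).map (Complex.ofReal)).charpoly).IsRoot μ) :
    ∃ d : Fin n → ℝ, (∀ i, 0 < d i) ∧ ∃ μ : ℂ, μ.re = 0 ∧ μ ≠ 0 ∧
      (((B * Matrix.diagonal d).map (Complex.ofReal)).charpoly).IsRoot μ := by
  obtain ⟨d, hd, μ₀, hμ₀re, hμ₀root⟩ := hDunstable
  rcases Nat.eq_zero_or_pos n with hn | hn
  · exfalso
    have h1 : ((B * Matrix.diagonal d).map (Complex.ofReal)).charpoly = 1 := by
      rw [Matrix.charpoly]
      have : IsEmpty (Fin n) := by rw [hn]; infer_instance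
      exact Matrix.det_isEmpty
    rw [h1] at hμ₀root
    simp [Polynomial.IsRoot] at hμ₀root
  -- the path of diagonal entries
  set e : ℝ → Fin n → ℝ := fun t i => (1 - t) + t * d i with he
  set M : ℝ → Matrix (Fin n) (Fin n) ℂ :=
    fun t => (B * Matrix.diagonal (e t)).map Complex.ofReal with hM
  set f : ℝ × ℂ → ℂ := fun p => (p.2 • (1 : Matrix (Fin n) (Fin n) ℂ) - M p.1).det with hfdef
  have hfroot : ∀ t μ, (((B * Matrix.diagonal (e t)).map Complex.ofReal).charpoly).IsRoot μ ↔
      f (t, μ) = 0 := by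
    intro t μ
    rw [Polynomial.IsRoot, evalCharpoly]
  -- entries of M
  have hMentry : ∀ t i j, M t i j = Complex.ofReal (B i j * ((1 - t) + t * d j)) := by
    intro t i j
    simp [hM, Matrix.map_apply, Matrix.mul_diagonal, he]
  -- continuity of f
  have hfc : Continuous f := by
    apply Continuous.matrix_det
    apply continuous_matrix
    intro i j
    have : (fun p : ℝ × ℂ => (p.2 • (1 : Matrix (Fin n) (Fin n) ℂ) - M p.1) i j)
        = fun p : ℝ × ℂ => p.2 * (1 : Matrix (Fin n) (Fin n) ℂ) i j
          - Complex.ofReal (B i j * ((1 - p.1) + p.1 * d j)) := by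
      funext p
      simp [Matrix.sub_apply, Matrix.smul_apply, hMentry, smul_eq_mul]
    rw [this]
    fun_prop
  -- uniform eigenvalue bound
  set C : ℝ := ∑ i, ∑ j, |B i j| * (1 + d j) with hC
  have hbound : ∀ t ∈ Set.Icc (0:ℝ) 1, ∀ μ : ℂ, f (t, μ) = 0 → ‖μ‖ ≤ C := by
    intro t ht μ hμ
    refine (eigBound (M t) μ hμ).trans ?_
    refine Finset.sum_le_sum fun i _ => Finset.sum_le_sum fun j _ => ?_
    rw [hMentry, Complex.norm_real, Real.norm_eq_abs, abs_mul]
    refine mul_le_mul_of_nonneg_left ?_ (abs_nonneg _)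
    have h1 : 0 ≤ (1 - t) + t * d j := by
      have := mul_nonneg ht.1 (hd j).le
      linarith [ht.2]
    rw [abs_of_nonneg h1]
    nlinarith [ht.1, ht.2, (hd j).le, mul_le_mul_of_nonneg_right ht.2 (hd j).le]
  -- positivity of e on [0,1]
  have hepos : ∀ t ∈ Set.Icc (0:ℝ) 1, ∀ i, 0 < e t i := by
    intro t ht i
    rcases eq_or_lt_of_le ht.2 with h | h
    · simp [he, h]
      linarith [hd i]
    · have := mul_nonneg ht.1 (hd i).le
      simp only [he]
      linarith
  -- the compact set
  set K : Set (ℝ × ℂ) := {p | p.1 ∈ Set.Icc (0:ℝ) 1 ∧ 0 ≤ p.2.re ∧ f p = 0} with hK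
  have hKclosed : IsClosed K := by
    refine IsClosed.inter (isClosed_Icc.preimage continuous_fst) ?_
    exact IsClosed.inter
      (isClosed_Ici.preimage (Complex.continuous_re.comp continuous_snd))
      (isClosed_singleton.preimage hfc)
  have hKcompact : IsCompact K := by
    refine IsCompact.of_isClosed_subset ((isCompact_Icc (a := (0:ℝ)) (b := 1)).prod (isCompact_closedBall (0:ℂ) C))
      hKclosed ?_
    rintro ⟨t, μ⟩ ⟨ht, hre, hf0⟩
    exact ⟨ht, by simpa [Metric.mem_closedBall, dist_eq_norm] using hbound t ht μ hf0⟩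
  have hKne : K.Nonempty := by
    refine ⟨(1, μ₀), ⟨by norm_num, hμ₀re.le, ?_⟩⟩
    have he1 : e 1 = d := by funext i; simp [he]
    rw [← hfroot, he1]
    exact hμ₀root
  set A : Set ℝ := Prod.fst '' K with hA
  have hAcompact : IsCompact A := hKcompact.image continuous_fst
  have hAne : A.Nonempty := hKne.image _
  set t₀ : ℝ := sInf A with ht₀
  have ht₀A : t₀ ∈ A := hAcompact.sInf_mem hAne
  obtain ⟨⟨t₀', μ⟩, hpK, hp1⟩ := ht₀A
  simp only at hp1
  subst hp1
  obtain ⟨ht₀Icc, hμre, hμf⟩ := hpK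
  have hAlb : ∀ t ∈ A, t₀ ≤ t := fun t ht => csInf_le hAcompact.bddBelow ht
  -- t₀ > 0
  have ht₀pos : 0 < t₀ := by
    rcases lt_or_eq_of_le ht₀Icc.1 with h | h
    · exact h
    · exfalso
      have hM0 : M 0 = B.map Complex.ofReal := by
        have he0 : e 0 = fun _ => 1 := by funext i; simp [he]
        rw [hM]
        simp only [he0, Matrix.diagonal_one, mul_one]
      have hμf0 : f (0, μ) = 0 := by rw [h]; exact hμf
      have : (((B.map Complex.ofReal)).charpoly).IsRoot μ := by
        rw [Polynomial.IsRoot, evalCharpoly, ← hM0]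
        exact hμf0
      linarith [hstable μ this, hμre]
  -- all roots strictly stable below t₀
  have hstab_lt : ∀ t, 0 ≤ t → t < t₀ → ∀ ν : ℂ, f (t, ν) = 0 → ν.re < 0 := by
    intro t ht0 htlt ν hν
    by_contra hcon
    push_neg at hcon
    have htIcc : t ∈ Set.Icc (0:ℝ) 1 := ⟨ht0, htlt.le.trans ht₀Icc.2⟩
    have : t ∈ A := ⟨(t, ν), ⟨htIcc, hcon, hν⟩, rfl⟩
    linarith [hAlb t this]
  -- re μ = 0
  have hμre0 : μ.re = 0 := by
    by_contra hcon
    have hμrepos : 0 < μ.re := lt_of_le_of_ne hμre (Ne.symm hcon)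
    -- lower bound on (0, t₀)
    have hlb : ∀ t, 0 ≤ t → t < t₀ → μ.re ^ n ≤ ‖f (t, μ)‖ := by
      intro t ht0 htlt
      have hmono : ((M t).charpoly).Monic := (M t).charpoly_monic
      have hdeg : ((M t).charpoly).natDegree = n := by
        rw [Matrix.charpoly_natDegree_eq_dim, Fintype.card_fin]
      have hroots : ∀ r ∈ ((M t).charpoly).roots, r.re < 0 := by
        intro r hr
        have := (Polynomial.mem_roots (hmono.ne_zero)).1 hr
        refine hstab_lt t ht0 htlt r ?_
        show ((r : ℂ) • (1 : Matrix (Fin n) (Fin n) ℂ) - M t).det = 0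
        rw [← evalCharpoly]
        exact this
      have := evalNormGe ((M t).charpoly) hmono hdeg hroots μ hμre
      rwa [evalCharpoly] at this
    -- limit along t ↗ t₀
    have htendsto : Filter.Tendsto (fun t => ‖f (t, μ)‖) (nhdsWithin t₀ (Set.Iio t₀))
        (nhds ‖f (t₀, μ)‖) := by
      exact ((hfc.comp (continuous_id.prodMk continuous_const)).norm).continuousAt.continuousWithinAt.tendsto
    have hev : ∀ᶠ t in nhdsWithin t₀ (Set.Iio t₀), μ.re ^ n ≤ ‖f (t, μ)‖ := by
      have h1 : ∀ᶠ t in nhdsWithin t₀ (Set.Iio t₀), t ∈ Set.Ioi (0:ℝ) := by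
        apply eventually_nhdsWithin_of_eventually_nhds
        exact eventually_mem_nhds_iff.mpr (Ioi_mem_nhds ht₀pos) |>.mono fun x hx => mem_of_mem_nhds hx
      filter_upwards [h1, self_mem_nhdsWithin] with t ht1 ht2
      exact hlb t (le_of_lt ht1) ht2
    have : μ.re ^ n ≤ ‖f (t₀, μ)‖ := ge_of_tendsto htendsto hev
    rw [hμf] at this
    simp only [norm_zero] at this
    exact absurd this (not_le.2 (pow_pos hμrepos n))
  -- μ ≠ 0
  have hdetB : B.det ≠ 0 := by
    intro h0
    have : (((B.map Complex.ofReal)).charpoly).IsRoot 0 := by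
      rw [Polynomial.IsRoot, evalCharpoly, zero_smul, zero_sub, Matrix.det_neg]
      have hBdet : (B.map Complex.ofReal).det = (B.det : ℂ) :=
        (RingHom.map_det Complex.ofRealHom B).symm
      rw [hBdet, h0]
      simp
    simpa using hstable 0 this
  have hμne : μ ≠ 0 := by
    intro h0
    subst h0
    rw [hfdef] at hμf
    simp only [zero_smul, zero_sub, Matrix.det_neg] at hμf
    have hdetM : (M t₀).det = Complex.ofReal ((B * Matrix.diagonal (e t₀)).det) :=
      (RingHom.map_det Complex.ofRealHom (B * Matrix.diagonal (e t₀))).symm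
    rw [hdetM] at hμf
    have h1 : (B * Matrix.diagonal (e t₀)).det = B.det * ∏ i, e t₀ i := by
      rw [Matrix.det_mul, Matrix.det_diagonal]
    have h2 : B.det * ∏ i, e t₀ i ≠ 0 := by
      refine mul_ne_zero hdetB ?_
      exact (Finset.prod_pos fun i _ => hepos t₀ ht₀Icc i).ne'
    rw [h1] at hμf
    rcases mul_eq_zero.1 hμf with h | h
    · exact pow_ne_zero _ (by norm_num : (-1 : ℂ) ≠ 0) h
    · exact h2 (by exact_mod_cast h)
  exact ⟨e t₀, hepos t₀ ht₀Icc, μ, hμre0, hμne, (hfroot t₀ μ).2 hμf⟩
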